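/- The classical Holevo information of the completely depolarising qubit channel used in indefinite input-output direction, χ(F_{|+⟩⟨+|}(N₁)) = (3/4)·[1 − H₂(1/3)] + 1/4 ≈ 0.3113 bits, is strictly positive, where H₂ is the binary entropy; in particular the flipped channel has nonzero classical capacity while C(N₁) = 0. -/

import Mathlib

open Matrix BigOperators Kronecker
open scoped ComplexOrder

noncomputable def plusM : Matrix (Fin 2) (Fin 2) ℂ := Matrix.of fun _ _ => (1 : ℂ) / 2

noncomputable def minusM : Matrix (Fin 2) (Fin 2) ℂ :=
  Matrix.of fun i j => if i = j then (1 : ℂ) / 2 else -((1 : ℂ) / 2)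

/-- The von Neumann entropy (in bits) of a matrix, via its eigenvalues. -/
noncomputable def vNent {n : Type*} [Fintype n] [DecidableEq n] (M : Matrix n n ℂ) : ℝ :=
  if h : M.IsHermitian then -∑ i, h.eigenvalues i * Real.logb 2 (h.eigenvalues i) else 0

/-- The set of Holevo quantities of output ensembles of a channel `f` over all input
ensembles of qubit density matrices. -/
def holevoSet {m : Type*} [Fintype m] [DecidableEq m]
    (f : Matrix (Fin 2) (Fin 2) ℂ → Matrix m m ℂ) : Set ℝ :=
  { x | ∃ (n : ℕ) (p : Fin n → ℝ) (ρ : Fin n → Matrix (Fin 2) (Fin 2) ℂ),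
      (∀ i, 0 ≤ p i) ∧ (∑ i, p i = 1) ∧
      (∀ i, (ρ i).PosSemidef ∧ (ρ i).trace = 1) ∧
      x = vNent (f (∑ i, ((p i : ℝ) : ℂ) • ρ i)) - ∑ i, p i * vNent (f (ρ i)) }

/-- The Holevo information of a channel: the supremum of Holevo quantities over ensembles. -/
noncomputable def holevoInfo {m : Type*} [Fintype m] [DecidableEq m]
    (f : Matrix (Fin 2) (Fin 2) ℂ → Matrix m m ℂ) : ℝ :=
  sSup (holevoSet f)

/-- The completely depolarising qubit channel used in indefinite input-output direction:
`F_{|+⟩⟨+|}(N₁)(ρ) = [I/4 + ρᵀ/4]⊗|+⟩⟨+| + [I/4 − ρᵀ/4]⊗|−⟩⟨−|`. -/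
noncomputable def flippedN1 (ρ : Matrix (Fin 2) (Fin 2) ℂ) :
    Matrix (Fin 2 × Fin 2) (Fin 2 × Fin 2) ℂ :=
  ((1 / 4 : ℂ) • ((1 : Matrix (Fin 2) (Fin 2) ℂ) + ρᵀ)) ⊗ₖ plusM
    + ((1 / 4 : ℂ) • ((1 : Matrix (Fin 2) (Fin 2) ℂ) - ρᵀ)) ⊗ₖ minusM

/-- The completely depolarising qubit channel `N₁(ρ) = I/2`. -/
noncomputable def complDepol (_ : Matrix (Fin 2) (Fin 2) ℂ) : Matrix (Fin 2) (Fin 2) ℂ :=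
  (1 / 2 : ℂ) • (1 : Matrix (Fin 2) (Fin 2) ℂ)

/-- The binary entropy function (base 2). -/
noncomputable def binEnt (x : ℝ) : ℝ := -(x * Real.logb 2 x) - (1 - x) * Real.logb 2 (1 - x)

/-! ### Auxiliary material -/

section Aux

open Polynomial

-- charpoly is invariant under unitary conjugation
lemma my_charpoly_conj {n : Type*} [Fintype n] [DecidableEq n]
    (V D : Matrix n n ℂ) (hV : V * Vᴴ = 1) :
    (V * D * Vᴴ).charpoly = D.charpoly := by
  have hc : Commute (Matrix.scalar n (X : ℂ[X])) ((C : ℂ →+* ℂ[X]).mapMatrix V) :=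
    Matrix.scalar_commute _ (fun r' => Commute.all _ _) _
  have key : charmatrix (V * D * Vᴴ)
      = (C : ℂ →+* ℂ[X]).mapMatrix V * charmatrix D * (C : ℂ →+* ℂ[X]).mapMatrix Vᴴ := by
    simp only [charmatrix, mul_sub, sub_mul, _root_.map_mul]
    congr 1
    rw [← hc.eq, mul_assoc, ← _root_.map_mul, hV, _root_.map_one, mul_one]
  rw [Matrix.charpoly, key, det_mul, det_mul, Matrix.charpoly]
  have h1 : ((C : ℂ →+* ℂ[X]).mapMatrix V).det * ((C : ℂ →+* ℂ[X]).mapMatrix Vᴴ).det = 1 := by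
    rw [← det_mul, ← _root_.map_mul, hV, _root_.map_one, det_one]
  calc ((C : ℂ →+* ℂ[X]).mapMatrix V).det * (charmatrix D).det * ((C : ℂ →+* ℂ[X]).mapMatrix Vᴴ).det
      = (charmatrix D).det * (((C : ℂ →+* ℂ[X]).mapMatrix V).det * ((C : ℂ →+* ℂ[X]).mapMatrix Vᴴ).det) := by ring
    _ = (charmatrix D).det := by rw [h1, mul_one]

lemma my_charpoly_diagonal {n : Type*} [Fintype n] [DecidableEq n] (d : n → ℂ) :
    (Matrix.diagonal d).charpoly = ∏ i, (X - C (d i)) := by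
  have h : charmatrix (Matrix.diagonal d) = Matrix.diagonal fun i => X - C (d i) := by
    ext i j
    by_cases h : i = j
    · subst h; simp
    · simp [h, Matrix.diagonal_apply_ne _ h]
  rw [Matrix.charpoly, h, det_diagonal]

lemma charpoly_of_conj {n : Type*} [Fintype n] [DecidableEq n] {M : Matrix n n ℂ}
    {V : Matrix n n ℂ} (hV : V * Vᴴ = 1) {d : n → ℝ}
    (hM : M = V * Matrix.diagonal (fun i => (d i : ℂ)) * Vᴴ) :
    M.charpoly = ∏ i, (X - C ((d i : ℂ))) := by
  rw [hM, my_charpoly_conj _ _ hV, my_charpoly_diagonal]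

lemma spectral_decomp {n : Type*} [Fintype n] [DecidableEq n] {M : Matrix n n ℂ}
    (hM : M.IsHermitian) :
    ∃ U : Matrix n n ℂ, U * Uᴴ = 1 ∧ Uᴴ * U = 1 ∧
      M = U * Matrix.diagonal (fun i => ((hM.eigenvalues i : ℝ) : ℂ)) * Uᴴ := by
  refine ⟨(hM.eigenvectorUnitary : Matrix n n ℂ), ?_, ?_, ?_⟩
  · rw [← Matrix.star_eq_conjTranspose]
    exact (Matrix.mem_unitaryGroup_iff).mp hM.eigenvectorUnitary.2
  · rw [← Matrix.star_eq_conjTranspose]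
    exact (Matrix.mem_unitaryGroup_iff').mp hM.eigenvectorUnitary.2
  · have h := hM.spectral_theorem
    rw [Unitary.conjStarAlgAut_apply, Matrix.star_eq_conjTranspose] at h
    exact h

lemma eig_multiset {n : Type*} [Fintype n] [DecidableEq n] {M : Matrix n n ℂ}
    (hM : M.IsHermitian) {V : Matrix n n ℂ} (hV : V * Vᴴ = 1) {d : n → ℝ}
    (hdec : M = V * Matrix.diagonal (fun i => (d i : ℂ)) * Vᴴ) :
    Multiset.map hM.eigenvalues Finset.univ.val = Multiset.map d Finset.univ.val := by
  obtain ⟨U, hU, -, hspec⟩ := spectral_decomp hM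
  have h1 := charpoly_of_conj hU hspec
  have h2 := charpoly_of_conj hV hdec
  have hre : ∀ e : n → ℝ, (∏ i, (X - C ((e i : ℝ) : ℂ))).roots
      = Multiset.map (fun i => ((e i : ℝ) : ℂ)) Finset.univ.val := by
    intro e
    have h : (∏ i, (X - C ((e i : ℝ) : ℂ)))
        = ((Finset.univ.val.map fun i => ((e i : ℝ) : ℂ)).map fun a => X - C a).prod := by
      rw [Multiset.map_map]; rfl
    rw [h, Polynomial.roots_multiset_prod_X_sub_C]
  have h := congrArg Polynomial.roots (h1.symm.trans h2)
  rw [hre, hre] at h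
  have h3 : (Multiset.map hM.eigenvalues Finset.univ.val).map (fun x : ℝ => (x : ℂ))
      = (Multiset.map d Finset.univ.val).map (fun x : ℝ => (x : ℂ)) := by
    rw [Multiset.map_map, Multiset.map_map]; exact h
  exact Multiset.map_injective Complex.ofReal_injective h3

lemma sum_phi_eig {n : Type*} [Fintype n] [DecidableEq n] {M : Matrix n n ℂ}
    (hM : M.IsHermitian) {V : Matrix n n ℂ} (hV : V * Vᴴ = 1) {d : n → ℝ}
    (hdec : M = V * Matrix.diagonal (fun i => (d i : ℂ)) * Vᴴ) (φ : ℝ → ℝ) :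
    ∑ i, φ (hM.eigenvalues i) = ∑ i, φ (d i) := by
  have h := congrArg (fun s => (Multiset.map φ s).sum) (eig_multiset hM hV hdec)
  simp only [Multiset.map_map] at h
  rw [Finset.sum, Finset.sum]
  exact h

lemma isHermitian_of_conj {n : Type*} [Fintype n] [DecidableEq n] {M : Matrix n n ℂ}
    {V : Matrix n n ℂ} {d : n → ℝ}
    (hdec : M = V * Matrix.diagonal (fun i => (d i : ℂ)) * Vᴴ) : M.IsHermitian := by
  rw [hdec]
  unfold Matrix.IsHermitian
  rw [conjTranspose_mul, conjTranspose_mul, conjTranspose_conjTranspose, diagonal_conjTranspose]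
  have h : star (fun i => ((d i : ℝ) : ℂ)) = fun i => ((d i : ℝ) : ℂ) := by
    funext i; simp [Complex.conj_ofReal]
  rw [h, mul_assoc]

lemma kron_conjTranspose {l m p q : Type*} (A : Matrix l m ℂ) (B : Matrix p q ℂ) :
    (A ⊗ₖ B)ᴴ = Aᴴ ⊗ₖ Bᴴ := by
  ext ⟨i1, i2⟩ ⟨j1, j2⟩
  simp [conjTranspose_apply, kroneckerMap_apply, star_mul']

noncomputable def Wm : Matrix (Fin 2) (Fin 2) ℂ :=
  (((Real.sqrt 2)⁻¹ : ℝ) : ℂ) • Matrix.of ![![1, 1], ![1, -1]]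

lemma ws : ((Real.sqrt 2 : ℝ) : ℂ)⁻¹ * ((Real.sqrt 2 : ℝ) : ℂ)⁻¹ = 1 / 2 := by
  rw [← mul_inv, ← Complex.ofReal_mul, Real.mul_self_sqrt (by norm_num)]
  norm_num

noncomputable def e0 : Fin 2 → ℂ := ![1, 0]
noncomputable def e1 : Fin 2 → ℂ := ![0, 1]

set_option linter.unreachableTactic false in
set_option linter.unusedTactic false in
lemma Wm_unitary : Wm * Wmᴴ = 1 := by
  ext i j
  fin_cases i <;> fin_cases j <;>
    · simp [Wm, Matrix.mul_apply, Fin.sum_univ_two, conjTranspose_apply, Complex.conj_ofReal,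
        Matrix.one_apply, Matrix.vecMul, dotProduct]
      try first
        | linear_combination (2:ℂ) * ws
        | linear_combination ws
        | linear_combination -ws
        | linear_combination -(2:ℂ) * ws

set_option linter.unreachableTactic false in
set_option linter.unusedTactic false in
lemma plusM_decomp : plusM = Wm * Matrix.diagonal e0 * Wmᴴ := by
  ext i j
  fin_cases i <;> fin_cases j <;>
    · simp [Wm, plusM, e0, Matrix.mul_apply, Fin.sum_univ_two, Matrix.diagonal_apply,
        conjTranspose_apply, Complex.conj_ofReal, Matrix.vecMul, dotProduct]
      try first
        | linear_combination (2:ℂ) * ws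
        | linear_combination ws
        | linear_combination -ws
        | linear_combination -(2:ℂ) * ws

set_option linter.unreachableTactic false in
set_option linter.unusedTactic false in
lemma minusM_decomp : minusM = Wm * Matrix.diagonal e1 * Wmᴴ := by
  ext i j
  fin_cases i <;> fin_cases j <;>
    · simp [Wm, minusM, e1, Matrix.mul_apply, Fin.sum_univ_two, Matrix.diagonal_apply,
        conjTranspose_apply, Complex.conj_ofReal, Matrix.vecMul, dotProduct]
      try first
        | linear_combination (2:ℂ) * ws
        | linear_combination ws
        | linear_combination -ws
        | linear_combination -(2:ℂ) * ws

/-- the four output eigenvalues -/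
noncomputable def d4 (μ : Fin 2 → ℝ) : Fin 2 × Fin 2 → ℝ :=
  fun p => if p.2 = 0 then (1 + μ p.1) / 4 else (1 - μ p.1) / 4

set_option linter.unusedTactic false in
lemma flipped_decomp (ρ : Matrix (Fin 2) (Fin 2) ℂ) (Vc : Matrix (Fin 2) (Fin 2) ℂ)
    (hV1 : Vc * Vcᴴ = 1) (μ : Fin 2 → ℝ)
    (hρt : ρᵀ = Vc * Matrix.diagonal (fun i => (μ i : ℂ)) * Vcᴴ) :
    flippedN1 ρ = (Vc ⊗ₖ Wm) * Matrix.diagonal (fun p => ((d4 μ p : ℝ) : ℂ)) * (Vc ⊗ₖ Wm)ᴴ := by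
  have hone : (1 : Matrix (Fin 2) (Fin 2) ℂ) = Vc * Matrix.diagonal (fun _ => (1:ℂ)) * Vcᴴ := by
    rw [Matrix.diagonal_one, mul_one, hV1]
  have hplus : (1 / 4 : ℂ) • ((1 : Matrix (Fin 2) (Fin 2) ℂ) + ρᵀ)
      = Vc * Matrix.diagonal (fun i => (1/4 : ℂ) * (1 + (μ i : ℂ))) * Vcᴴ := by
    rw [hρt]
    nth_rewrite 1 [hone]
    rw [← Matrix.add_mul, ← Matrix.mul_add, Matrix.diagonal_add]
    have hdg : (Matrix.diagonal fun i => (1/4 : ℂ) * (1 + (μ i : ℂ)))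
        = (1/4 : ℂ) • Matrix.diagonal (fun i => 1 + (μ i : ℂ)) := by
      ext i j; by_cases h : i = j <;> simp [h, Matrix.diagonal_apply, Matrix.smul_apply, smul_eq_mul]
    rw [hdg, Matrix.mul_smul, Matrix.smul_mul]
  have hminus : (1 / 4 : ℂ) • ((1 : Matrix (Fin 2) (Fin 2) ℂ) - ρᵀ)
      = Vc * Matrix.diagonal (fun i => (1/4 : ℂ) * (1 - (μ i : ℂ))) * Vcᴴ := by
    rw [hρt]
    nth_rewrite 1 [hone]
    rw [← Matrix.sub_mul, ← Matrix.mul_sub, Matrix.diagonal_sub]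
    have hdg : (Matrix.diagonal fun i => (1/4 : ℂ) * (1 - (μ i : ℂ)))
        = (1/4 : ℂ) • Matrix.diagonal (fun i => 1 - (μ i : ℂ)) := by
      ext i j; by_cases h : i = j <;> simp [h, Matrix.diagonal_apply, Matrix.smul_apply, smul_eq_mul]
    rw [hdg, Matrix.mul_smul, Matrix.smul_mul]
  unfold flippedN1
  rw [hplus, hminus, plusM_decomp, minusM_decomp]
  rw [kron_conjTranspose]
  rw [Matrix.mul_kronecker_mul, Matrix.mul_kronecker_mul,
      Matrix.mul_kronecker_mul, Matrix.mul_kronecker_mul]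
  rw [Matrix.diagonal_kronecker_diagonal, Matrix.diagonal_kronecker_diagonal]
  rw [← Matrix.add_mul, ← Matrix.mul_add, Matrix.diagonal_add]
  have hd : (fun mn : Fin 2 × Fin 2 => (1/4:ℂ) * (1 + (μ mn.1:ℂ)) * e0 mn.2
        + (1/4:ℂ) * (1 - (μ mn.1:ℂ)) * e1 mn.2)
      = fun p => ((d4 μ p : ℝ) : ℂ) := by
    funext ⟨i, j⟩
    fin_cases j <;> · simp [d4, e0, e1]; push_cast; ring
  rw [hd]

lemma flipped_unitary (Vc : Matrix (Fin 2) (Fin 2) ℂ) (hV1 : Vc * Vcᴴ = 1) :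
    (Vc ⊗ₖ Wm) * (Vc ⊗ₖ Wm)ᴴ = 1 := by
  rw [kron_conjTranspose, ← Matrix.mul_kronecker_mul, hV1, Wm_unitary, Matrix.one_kronecker_one]

noncomputable def Phi (x : ℝ) : ℝ := -(x * Real.logb 2 x)

lemma phi_concave : ConcaveOn ℝ (Set.Ici 0) Phi := by
  have h : Phi = (Real.log 2)⁻¹ • Real.negMulLog := by
    funext x
    simp only [Phi, Pi.smul_apply, smul_eq_mul, Real.negMulLog, Real.logb, div_eq_inv_mul]
    ring
  rw [h]
  exact Real.concaveOn_negMulLog.smul (inv_nonneg.mpr (Real.log_nonneg one_le_two))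

lemma Phi_zero : Phi 0 = 0 := by simp [Phi]
lemma Phi_quarter : Phi (1/4) = 1/2 := by
  have h : Real.logb 2 (1/4 : ℝ) = -2 := by
    rw [one_div, Real.logb_inv]
    rw [show (4:ℝ) = 2^(2:ℕ) by norm_num, Real.logb_pow, Real.logb_self_eq_one] <;> norm_num
  unfold Phi; rw [h]; norm_num
lemma Phi_half : Phi (1/2) = 1/2 := by
  have h : Real.logb 2 (1/2 : ℝ) = -1 := by
    rw [one_div, Real.logb_inv, Real.logb_self_eq_one] <;> norm_num
  unfold Phi; rw [h]; norm_num
lemma Phi_eighth : Phi (1/8) = 3/8 := by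
  have h : Real.logb 2 (1/8 : ℝ) = -3 := by
    rw [one_div, Real.logb_inv]
    rw [show (8:ℝ) = 2^(3:ℕ) by norm_num, Real.logb_pow, Real.logb_self_eq_one] <;> norm_num
  unfold Phi; rw [h]; norm_num
lemma Phi_three_eighth : Phi (3/8) = 3/8 * (3 - Real.logb 2 3) := by
  have h : Real.logb 2 (3/8 : ℝ) = Real.logb 2 3 - 3 := by
    rw [Real.logb_div (by norm_num) (by norm_num)]
    rw [show (8:ℝ) = 2^(3:ℕ) by norm_num, Real.logb_pow, Real.logb_self_eq_one] <;> norm_num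
  unfold Phi; rw [h]; ring

lemma phi_combo {x y a b : ℝ} (hx : 0 ≤ x) (hy : 0 ≤ y) (ha : 0 ≤ a) (hb : 0 ≤ b)
    (hab : a + b = 1) : a * Phi x + b * Phi y ≤ Phi (a*x + b*y) := by
  have h := phi_concave.2 (Set.mem_Ici.mpr hx) (Set.mem_Ici.mpr hy) ha hb hab
  simpa [smul_eq_mul] using h

lemma sum_le (μ0 μ1 : ℝ) (h0 : 0 ≤ μ0) (h1 : 0 ≤ μ1) (h0' : μ0 ≤ 1) (h1' : μ1 ≤ 1) :
    Phi ((1+μ0)/4) + Phi ((1-μ0)/4) + (Phi ((1+μ1)/4) + Phi ((1-μ1)/4))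
      ≤ 2 * Phi ((2+μ0+μ1)/8) + 2 * Phi ((2-μ0-μ1)/8) := by
  have c1 : Phi ((1+μ0)/4) / 2 + Phi ((1+μ1)/4) / 2 ≤ Phi ((2+μ0+μ1)/8) := by
    have h := phi_combo (x := (1+μ0)/4) (y := (1+μ1)/4) (a := 1/2) (b := 1/2)
      (by linarith) (by linarith) (by norm_num) (by norm_num) (by norm_num)
    have harg : 1/2 * ((1+μ0)/4) + 1/2 * ((1+μ1)/4) = (2+μ0+μ1)/8 := by ring
    rw [harg] at h; linarith
  have c2 : Phi ((1-μ0)/4) / 2 + Phi ((1-μ1)/4) / 2 ≤ Phi ((2-μ0-μ1)/8) := by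
    have h := phi_combo (x := (1-μ0)/4) (y := (1-μ1)/4) (a := 1/2) (b := 1/2)
      (by linarith) (by linarith) (by norm_num) (by norm_num) (by norm_num)
    have harg : 1/2 * ((1-μ0)/4) + 1/2 * ((1-μ1)/4) = (2-μ0-μ1)/8 := by ring
    rw [harg] at h; linarith
  linarith

lemma sum_ge (μ0 μ1 : ℝ) (h0 : 0 ≤ μ0) (h1 : 0 ≤ μ1) (h0' : μ0 ≤ 1) (h1' : μ1 ≤ 1) :
    1/2 + 1/2 + ((1-μ0)/2 + (1-μ1)/2)
      ≤ Phi ((1+μ0)/4) + Phi ((1-μ0)/4) + (Phi ((1+μ1)/4) + Phi ((1-μ1)/4)) := by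
  have key1 : ∀ μ : ℝ, 0 ≤ μ → μ ≤ 1 → 1/2 ≤ Phi ((1+μ)/4) := by
    intro μ hμ hμ'
    have h := phi_combo (x := (1/4 : ℝ)) (y := (1/2 : ℝ)) (a := 1-μ) (b := μ)
      (by norm_num) (by norm_num) (by linarith) (by linarith) (by ring)
    have harg : (1-μ) * (1/4 : ℝ) + μ * (1/2) = (1+μ)/4 := by ring
    rw [harg, Phi_quarter, Phi_half] at h; linarith
  have key2 : ∀ μ : ℝ, 0 ≤ μ → μ ≤ 1 → (1-μ)/2 ≤ Phi ((1-μ)/4) := by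
    intro μ hμ hμ'
    have h := phi_combo (x := (1/4 : ℝ)) (y := (0 : ℝ)) (a := 1-μ) (b := μ)
      (by norm_num) (by norm_num) (by linarith) (by linarith) (by ring)
    have harg : (1-μ) * (1/4 : ℝ) + μ * 0 = (1-μ)/4 := by ring
    rw [harg, Phi_quarter, Phi_zero] at h; linarith
  have k1 := key1 μ0 h0 h0'
  have k2 := key1 μ1 h1 h1'
  have k3 := key2 μ0 h0 h0'
  have k4 := key2 μ1 h1 h1'
  linarith

lemma vNent_flipped (ρ : Matrix (Fin 2) (Fin 2) ℂ) (Vc : Matrix (Fin 2) (Fin 2) ℂ)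
    (hV1 : Vc * Vcᴴ = 1) (μ : Fin 2 → ℝ)
    (hρt : ρᵀ = Vc * Matrix.diagonal (fun i => (μ i : ℂ)) * Vcᴴ) :
    vNent (flippedN1 ρ)
      = Phi ((1 + μ 0)/4) + Phi ((1 - μ 0)/4) + (Phi ((1 + μ 1)/4) + Phi ((1 - μ 1)/4)) := by
  have hdec := flipped_decomp ρ Vc hV1 μ hρt
  have hU := flipped_unitary Vc hV1
  have hherm : (flippedN1 ρ).IsHermitian := isHermitian_of_conj hdec
  rw [vNent, dif_pos hherm]
  have hneg : -∑ i, hherm.eigenvalues i * Real.logb 2 (hherm.eigenvalues i)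
      = ∑ i, Phi (hherm.eigenvalues i) := by
    rw [← Finset.sum_neg_distrib]
    rfl
  rw [hneg, sum_phi_eig hherm hU hdec Phi, Fintype.sum_prod_type]
  simp [Fin.sum_univ_two, d4]

lemma trace_eq_sum_eig {n : Type*} [Fintype n] [DecidableEq n] {M : Matrix n n ℂ}
    (hM : M.IsHermitian) : M.trace = ∑ i, ((hM.eigenvalues i : ℝ) : ℂ) := by
  obtain ⟨U, hU, hU', hspec⟩ := spectral_decomp hM
  conv_lhs => rw [hspec]
  rw [Matrix.trace_mul_cycle, hU', one_mul, Matrix.trace_diagonal]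

lemma exists_mu (ρ : Matrix (Fin 2) (Fin 2) ℂ) (h : ρ.PosSemidef) (ht : ρ.trace = 1) :
    ∃ μ : Fin 2 → ℝ, 0 ≤ μ 0 ∧ 0 ≤ μ 1 ∧ μ 0 + μ 1 = 1 ∧
      vNent (flippedN1 ρ)
        = Phi ((1 + μ 0)/4) + Phi ((1 - μ 0)/4) + (Phi ((1 + μ 1)/4) + Phi ((1 - μ 1)/4)) := by
  have hh := h.1
  obtain ⟨U, hU, hU', hspec⟩ := spectral_decomp hh
  refine ⟨hh.eigenvalues, h.eigenvalues_nonneg 0, h.eigenvalues_nonneg 1, ?_, ?_⟩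
  · have h1 := trace_eq_sum_eig hh
    rw [ht, Fin.sum_univ_two] at h1
    exact_mod_cast h1.symm
  · set Vc := Uᴴᵀ with hVcdef
    have hVcH : Vcᴴ = Uᵀ := by
      ext i j; simp [hVcdef, conjTranspose_apply, transpose_apply]
    have hVc : Vc * Vcᴴ = 1 := by
      rw [hVcH, hVcdef, ← Matrix.transpose_mul, hU, Matrix.transpose_one]
    have hρt : ρᵀ = Vc * Matrix.diagonal (fun i => ((hh.eigenvalues i : ℝ) : ℂ)) * Vcᴴ := by
      conv_lhs => rw [hspec]
      rw [Matrix.transpose_mul, Matrix.transpose_mul, Matrix.diagonal_transpose,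
        hVcH, hVcdef, mul_assoc]
    exact vNent_flipped ρ Vc hVc _ hρt

lemma psd_smul {A : Matrix (Fin 2) (Fin 2) ℂ} (hA : A.PosSemidef) {c : ℝ} (hc : 0 ≤ c) :
    (((c : ℝ) : ℂ) • A).PosSemidef := by
  constructor
  · show (((c : ℝ) : ℂ) • A)ᴴ = _
    rw [conjTranspose_smul, hA.1.eq]
    congr 1
    simp [Complex.star_def, Complex.conj_ofReal]
  · intro x
    have h1 : (0 : ℂ) ≤ ((c : ℝ) : ℂ) := by exact_mod_cast hc
    exact (hA.smul h1).2 x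

lemma psd_mix {n : ℕ} (p : Fin n → ℝ) (hp : ∀ i, 0 ≤ p i)
    (ρs : Fin n → Matrix (Fin 2) (Fin 2) ℂ) (h : ∀ i, (ρs i).PosSemidef) :
    (∑ i, ((p i : ℝ) : ℂ) • ρs i).PosSemidef := by
  exact Finset.sum_induction _ (fun A : Matrix (Fin 2) (Fin 2) ℂ => A.PosSemidef)
    (fun a b ha hb => ha.add hb) Matrix.PosSemidef.zero
    (fun i _ => psd_smul (h i) (hp i))

end Aux

/-- The Holevo information of the completely depolarising qubit channel used in indefinite
input-output direction equals `(3/4)(1 − H₂(1/3)) + 1/4 ≈ 0.3113` bits and is strictly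
positive, whereas the Holevo information (hence classical capacity) of `N₁` itself is 0. -/
theorem holevo_flipped_completely_depolarising :
    holevoInfo flippedN1 = 3 / 4 * (1 - binEnt (1 / 3)) + 1 / 4
    ∧ 0 < holevoInfo flippedN1
    ∧ holevoInfo complDepol = 0 := by
  set L := Real.logb 2 3 with hLdef
  -- the value of the entropy of the output of the uniform classical ensemble
  have hone_unit : ((1 : Matrix (Fin 2) (Fin 2) ℂ)) * (1 : Matrix (Fin 2) (Fin 2) ℂ)ᴴ = 1 := by
    rw [conjTranspose_one, one_mul]
  have hv0 : vNent (flippedN1 (Matrix.diagonal (fun _ : Fin 2 => (1/2 : ℂ))))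
      = 3 - 3/4 * L := by
    have hρt : (Matrix.diagonal (fun _ : Fin 2 => (1/2 : ℂ)))ᵀ
        = 1 * Matrix.diagonal (fun _ : Fin 2 => (((1/2 : ℝ)) : ℂ))
          * (1 : Matrix (Fin 2) (Fin 2) ℂ)ᴴ := by
      rw [Matrix.diagonal_transpose, conjTranspose_one, one_mul, mul_one]
      norm_num
    rw [vNent_flipped _ 1 hone_unit (fun _ => 1/2) hρt]
    rw [show ((1:ℝ) + 1/2)/4 = 3/8 by norm_num, show ((1:ℝ) - 1/2)/4 = 1/8 by norm_num,
      Phi_three_eighth, Phi_eighth]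
    ring
  have hvi : ∀ i : Fin 2,
      vNent (flippedN1 (Matrix.diagonal (fun j => if j = i then (1:ℂ) else 0))) = 3/2 := by
    have key : ∀ i : Fin 2,
        vNent (flippedN1 (Matrix.diagonal (fun j => if j = i then (1:ℂ) else 0)))
          = Phi ((1 + if (0:Fin 2) = i then (1:ℝ) else 0)/4)
            + Phi ((1 - if (0:Fin 2) = i then (1:ℝ) else 0)/4)
            + (Phi ((1 + if (1:Fin 2) = i then (1:ℝ) else 0)/4)
              + Phi ((1 - if (1:Fin 2) = i then (1:ℝ) else 0)/4)) := by
      intro i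
      have hfun : (fun j : Fin 2 => (((if j = i then (1:ℝ) else 0) : ℝ) : ℂ))
          = fun j => if j = i then (1:ℂ) else 0 := by
        funext j; split_ifs <;> simp
      have hρt : (Matrix.diagonal (fun j => if j = i then (1:ℂ) else 0))ᵀ
          = 1 * Matrix.diagonal (fun j : Fin 2 => (((if j = i then (1:ℝ) else 0) : ℝ) : ℂ))
            * (1 : Matrix (Fin 2) (Fin 2) ℂ)ᴴ := by
        rw [hfun, Matrix.diagonal_transpose, conjTranspose_one, one_mul, mul_one]
      exact vNent_flipped _ 1 hone_unit (fun j => if j = i then (1:ℝ) else 0) hρt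
    have hvi0 : vNent (flippedN1
        (Matrix.diagonal (fun j => if j = (0:Fin 2) then (1:ℂ) else 0))) = 3/2 := by
      rw [key 0, if_pos rfl, if_neg (by decide : ¬ ((1:Fin 2) = 0))]
      rw [show ((1:ℝ) + 1)/4 = 1/2 by norm_num, show ((1:ℝ) - 1)/4 = 0 by norm_num,
        show ((1:ℝ) + 0)/4 = 1/4 by norm_num, show ((1:ℝ) - 0)/4 = 1/4 by norm_num,
        Phi_half, Phi_zero, Phi_quarter]
      norm_num
    have hvi1 : vNent (flippedN1
        (Matrix.diagonal (fun j => if j = (1:Fin 2) then (1:ℂ) else 0))) = 3/2 := by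
      rw [key 1, if_pos rfl, if_neg (by decide : ¬ ((0:Fin 2) = 1))]
      rw [show ((1:ℝ) + 1)/4 = 1/2 by norm_num, show ((1:ℝ) - 1)/4 = 0 by norm_num,
        show ((1:ℝ) + 0)/4 = 1/4 by norm_num, show ((1:ℝ) - 0)/4 = 1/4 by norm_num,
        Phi_half, Phi_zero, Phi_quarter]
      norm_num
    intro i
    fin_cases i
    · exact hvi0
    · exact hvi1
  -- membership of the optimal value
  have hmem : (3 - 3/4 * L - 3/2 : ℝ) ∈ holevoSet flippedN1 := by
    refine ⟨2, (fun _ => 1/2), (fun i => Matrix.diagonal (fun j => if j = i then (1:ℂ) else 0)),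
      fun i => by norm_num, by rw [Fin.sum_univ_two]; norm_num, ?_, ?_⟩
    · intro i
      constructor
      · refine Matrix.posSemidef_diagonal_iff.mpr fun j => ?_
        split_ifs
        · exact zero_le_one
        · exact le_refl 0
      · rw [Matrix.trace_diagonal]
        simp
    · have hmix : (∑ i : Fin 2, (((1/2 : ℝ)) : ℂ)
          • Matrix.diagonal (fun j => if j = i then (1:ℂ) else 0))
          = Matrix.diagonal (fun _ : Fin 2 => (1/2 : ℂ)) := by
        rw [Fin.sum_univ_two]
        ext j k
        fin_cases j <;> fin_cases k <;>
          simp [Matrix.diagonal_apply] <;> norm_num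
      rw [hmix, hv0, Fin.sum_univ_two, hvi 0, hvi 1]
      ring
  -- upper bound
  have hub : ∀ x ∈ holevoSet flippedN1, x ≤ 3 - 3/4 * L - 3/2 := by
    rintro x ⟨n, p, ρs, hp, hps, hcond, rfl⟩
    have hmixpsd := psd_mix p hp ρs (fun i => (hcond i).1)
    have hmixtr : (∑ i, ((p i : ℝ) : ℂ) • ρs i).trace = 1 := by
      rw [Matrix.trace_sum]
      simp only [Matrix.trace_smul, smul_eq_mul]
      have h1 : ∑ i, ((p i : ℝ) : ℂ) * (ρs i).trace = ∑ i, ((p i : ℝ) : ℂ) :=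
        Finset.sum_congr rfl fun i _ => by rw [(hcond i).2, mul_one]
      rw [h1]
      have h2 := congrArg (fun r : ℝ => (r : ℂ)) hps
      push_cast at h2
      exact h2
    obtain ⟨μ, m0, m1, msum, hvmix⟩ := exists_mu _ hmixpsd hmixtr
    have hA : vNent (flippedN1 (∑ i, ((p i : ℝ) : ℂ) • ρs i)) ≤ 3 - 3/4 * L := by
      rw [hvmix]
      have h := sum_le (μ 0) (μ 1) m0 m1 (by linarith) (by linarith)
      have e1 : (2 + μ 0 + μ 1)/8 = 3/8 := by rw [show (2:ℝ) + μ 0 + μ 1 = 3 by linarith]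
      have e2 : (2 - μ 0 - μ 1)/8 = 1/8 := by rw [show (2:ℝ) - μ 0 - μ 1 = 1 by linarith]
      rw [e1, e2, Phi_three_eighth, Phi_eighth] at h
      rw [hLdef]
      linarith
    have hB : ∀ i, 3/2 ≤ vNent (flippedN1 (ρs i)) := by
      intro i
      obtain ⟨ν, n0, n1, nsum, hv⟩ := exists_mu _ (hcond i).1 (hcond i).2
      rw [hv]
      have h := sum_ge (ν 0) (ν 1) n0 n1 (by linarith) (by linarith)
      linarith
    have hS : 3/2 ≤ ∑ i, p i * vNent (flippedN1 (ρs i)) := by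
      have h1 : ∑ i, p i * (3/2 : ℝ) ≤ ∑ i, p i * vNent (flippedN1 (ρs i)) :=
        Finset.sum_le_sum fun i _ => mul_le_mul_of_nonneg_left (hB i) (hp i)
      rw [← Finset.sum_mul, hps, one_mul] at h1
      exact h1
    linarith
  have hmain : holevoInfo flippedN1 = 3 - 3/4 * L - 3/2 :=
    le_antisymm (csSup_le ⟨_, hmem⟩ hub) (le_csSup ⟨_, hub⟩ hmem)
  -- the closed-form value
  have hbin : binEnt (1/3) = L - 2/3 := by
    unfold binEnt
    rw [show (1:ℝ) - 1/3 = 2/3 by norm_num]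
    rw [show (1/3 : ℝ) = 3⁻¹ by norm_num, Real.logb_inv]
    rw [Real.logb_div (by norm_num) (by norm_num), Real.logb_self_eq_one (by norm_num)]
    rw [hLdef]
    ring
  have hval : 3/4 * (1 - binEnt (1/3)) + 1/4 = 3 - 3/4 * L - 3/2 := by
    rw [hbin]; ring
  -- positivity
  have hL4 : Real.logb 2 (4:ℝ) = 2 := by
    rw [show (4:ℝ) = 2^(2:ℕ) by norm_num, Real.logb_pow, Real.logb_self_eq_one] <;> norm_num
  have hLlt : L < 2 := by
    have h := Real.logb_lt_logb (b := 2) (x := 3) (y := 4) (by norm_num) (by norm_num) (by norm_num)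
    rw [hL4] at h
    exact h
  -- the depolarising channel
  have hcd : holevoInfo complDepol = 0 := by
    have hzero_mem : (0:ℝ) ∈ holevoSet complDepol := by
      refine ⟨1, fun _ => 1, fun _ => Matrix.diagonal (fun _ : Fin 2 => (1/2 : ℂ)),
        fun i => zero_le_one, by simp, ?_, ?_⟩
      · intro i
        constructor
        · refine Matrix.posSemidef_diagonal_iff.mpr fun j => ?_
          have h : ((0:ℝ) : ℂ) ≤ ((1/2 : ℝ) : ℂ) := by exact_mod_cast (by norm_num : (0:ℝ) ≤ 1/2)
          simpa using h
        · rw [Matrix.trace_diagonal]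
          rw [Fin.sum_univ_two]
          norm_num
      · simp [complDepol]
    have hub0 : ∀ x ∈ holevoSet complDepol, x ≤ 0 := by
      rintro x ⟨n, p, ρs, hp, hps, hcond, rfl⟩
      simp only [complDepol]
      have h1 : ∑ i, p i * vNent ((1/2 : ℂ) • (1 : Matrix (Fin 2) (Fin 2) ℂ))
          = vNent ((1/2 : ℂ) • (1 : Matrix (Fin 2) (Fin 2) ℂ)) := by
        rw [← Finset.sum_mul, hps, one_mul]
      rw [h1, sub_self]
    exact le_antisymm (csSup_le ⟨0, hzero_mem⟩ hub0) (le_csSup ⟨0, hub0⟩ hzero_mem)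
  refine ⟨by rw [hmain, hval], ?_, hcd⟩
  rw [hmain]
  linarith
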